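/- Let a and b be distinct points of the Euclidean plane ℝ² and let θ be a real number with π/2 ≤ θ < π. Then the set { p ∈ ℝ² | p ≠ a, p ≠ b, and ∠(a, p, b) ≥ θ } is convex, where ∠(a, p, b) denotes the (undirected) angle at p in the triangle a p b. -/

import Mathlib

set_option maxHeartbeats 1000000
open Real

private lemma comb_I (t s x0 x1 y0 y1 a0 a1 b0 b1 : ℝ) (hts : t + s = 1) :
    (a0 - (t*x0+s*y0)) * (b0 - (t*x0+s*y0)) + (a1 - (t*x1+s*y1)) * (b1 - (t*x1+s*y1))
      = t * ((a0-x0)*(b0-x0) + (a1-x1)*(b1-x1)) + s * ((a0-y0)*(b0-y0)+(a1-y1)*(b1-y1))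
        - t*s*((x0-y0)^2 + (x1-y1)^2) := by
  have h : s = 1 - t := by linarith
  subst h; ring

private lemma comb_W (t s x0 x1 y0 y1 a0 a1 b0 b1 : ℝ) (hts : t + s = 1) :
    (a0 - (t*x0+s*y0)) * (b1 - (t*x1+s*y1)) - (a1 - (t*x1+s*y1)) * (b0 - (t*x0+s*y0))
      = t * ((a0-x0)*(b1-x1) - (a1-x1)*(b0-x0)) + s * ((a0-y0)*(b1-y1) - (a1-y1)*(b0-y0)) := by
  have h : s = 1 - t := by linarith
  subst h; ring

private lemma key_iff (a b p : EuclideanSpace ℝ (Fin 2)) (θ : ℝ)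
    (hθ₁ : Real.pi / 2 ≤ θ) (hθ₂ : θ < Real.pi)
    (hpa : p ≠ a) (hpb : p ≠ b) :
    θ ≤ EuclideanGeometry.angle a p b ↔
      Real.sin θ * ((a 0 - p 0) * (b 0 - p 0) + (a 1 - p 1) * (b 1 - p 1)) -
        Real.cos θ * |(a 0 - p 0) * (b 1 - p 1) - (a 1 - p 1) * (b 0 - p 0)| ≤ 0 := by
  have hpi := Real.pi_pos
  have hu : a - p ≠ 0 := sub_ne_zero.2 (fun h => hpa h.symm)
  have hv : b - p ≠ 0 := sub_ne_zero.2 (fun h => hpb h.symm)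
  have hN : 0 < ‖a - p‖ * ‖b - p‖ :=
    mul_pos (norm_pos_iff.2 hu) (norm_pos_iff.2 hv)
  set α := EuclideanGeometry.angle a p b with hαdef
  have hα0 : 0 ≤ α := EuclideanGeometry.angle_nonneg _ _ _
  have hαπ : α ≤ π := EuclideanGeometry.angle_le_pi _ _ _
  have hangle : α = InnerProductGeometry.angle (a - p) (b - p) := rfl
  have hsub0 : (a - p) 0 = a 0 - p 0 := rfl
  have hsub1 : (a - p) 1 = a 1 - p 1 := rfl
  have hI : (inner ℝ (a - p) (b - p) : ℝ)
      = (a 0 - p 0) * (b 0 - p 0) + (a 1 - p 1) * (b 1 - p 1) := by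
    simp [PiLp.inner_apply, Fin.sum_univ_two, RCLike.inner_apply, mul_comm]
  have hcos : Real.cos α * (‖a - p‖ * ‖b - p‖) = (inner ℝ (a - p) (b - p) : ℝ) := by
    rw [hangle]; exact InnerProductGeometry.cos_angle_mul_norm_mul_norm _ _
  have hsin : Real.sin α * (‖a - p‖ * ‖b - p‖)
      = |(a 0 - p 0) * (b 1 - p 1) - (a 1 - p 1) * (b 0 - p 0)| := by
    rw [hangle, InnerProductGeometry.sin_angle_mul_norm_mul_norm]
    have hL : (inner ℝ (a - p) (a - p) : ℝ) * (inner ℝ (b - p) (b - p) : ℝ)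
        - (inner ℝ (a - p) (b - p) : ℝ) * (inner ℝ (a - p) (b - p) : ℝ)
        = ((a 0 - p 0) * (b 1 - p 1) - (a 1 - p 1) * (b 0 - p 0))^2 := by
      simp only [PiLp.inner_apply, Fin.sum_univ_two, RCLike.inner_apply, conj_trivial, PiLp.sub_apply, WithLp.ofLp_sub, Pi.sub_apply]; ring
    rw [hL, Real.sqrt_sq_eq_abs]
  have e : Real.sin (θ - α) * (‖a - p‖ * ‖b - p‖)
      = Real.sin θ * ((a 0 - p 0) * (b 0 - p 0) + (a 1 - p 1) * (b 1 - p 1)) -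
        Real.cos θ * |(a 0 - p 0) * (b 1 - p 1) - (a 1 - p 1) * (b 0 - p 0)| := by
    rw [Real.sin_sub]
    linear_combination Real.sin θ * hcos - Real.cos θ * hsin + Real.sin θ * hI
  constructor
  · intro h
    have hsineg : Real.sin (θ - α) ≤ 0 :=
      Real.sin_nonpos_of_nonpos_of_neg_pi_le (by linarith) (by linarith)
    nlinarith [e, hN, hsineg]
  · intro h
    by_contra hlt
    push_neg at hlt
    have h1 : 0 < Real.sin (θ - α) := Real.sin_pos_of_pos_of_lt_pi (by linarith) (by linarith)
    nlinarith [e, hN, h1]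

theorem obtuse_angle_region_convex (a b : EuclideanSpace ℝ (Fin 2)) (hab : a ≠ b)
    (θ : ℝ) (hθ₁ : Real.pi / 2 ≤ θ) (hθ₂ : θ < Real.pi) :
    Convex ℝ {p : EuclideanSpace ℝ (Fin 2) |
      p ≠ a ∧ p ≠ b ∧ θ ≤ EuclideanGeometry.angle a p b} := by
  have hpi := Real.pi_pos
  have hsinθ : 0 < Real.sin θ := Real.sin_pos_of_pos_of_lt_pi (by linarith) hθ₂
  have hcosθ : Real.cos θ ≤ 0 := Real.cos_nonpos_of_pi_div_two_le_of_le hθ₁ (by linarith)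
  intro p hp q hq t s ht hs hts
  simp only [Set.mem_setOf_eq] at hp hq ⊢
  obtain ⟨hpa, hpb, hpθ⟩ := hp
  obtain ⟨hqa, hqb, hqθ⟩ := hq
  rcases eq_or_lt_of_le ht with h0 | ht'
  · have hs1 : s = 1 := by linarith
    rw [← h0, hs1, zero_smul, one_smul, zero_add]
    exact ⟨hqa, hqb, hqθ⟩
  rcases eq_or_lt_of_le hs with h1 | hs'
  · have ht1 : t = 1 := by linarith
    rw [← h1, ht1, zero_smul, one_smul, add_zero]
    exact ⟨hpa, hpb, hpθ⟩
  set Ip := (a 0 - p 0) * (b 0 - p 0) + (a 1 - p 1) * (b 1 - p 1) with hIp_def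
  set Iq := (a 0 - q 0) * (b 0 - q 0) + (a 1 - q 1) * (b 1 - q 1) with hIq_def
  set Wp := (a 0 - p 0) * (b 1 - p 1) - (a 1 - p 1) * (b 0 - p 0) with hWp_def
  set Wq := (a 0 - q 0) * (b 1 - q 1) - (a 1 - q 1) * (b 0 - q 0) with hWq_def
  have hkp : Real.sin θ * Ip - Real.cos θ * |Wp| ≤ 0 := (key_iff a b p θ hθ₁ hθ₂ hpa hpb).mp hpθ
  have hkq : Real.sin θ * Iq - Real.cos θ * |Wq| ≤ 0 := (key_iff a b q θ hθ₁ hθ₂ hqa hqb).mp hqθ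
  have hIp0 : Ip ≤ 0 := by
    by_contra h
    push_neg at h
    nlinarith [mul_nonneg (neg_nonneg.2 hcosθ) (abs_nonneg Wp), mul_pos hsinθ h]
  have hIq0 : Iq ≤ 0 := by
    by_contra h
    push_neg at h
    nlinarith [mul_nonneg (neg_nonneg.2 hcosθ) (abs_nonneg Wq), mul_pos hsinθ h]
  have hr0 : (t • p + s • q) 0 = t * p 0 + s * q 0 := by
    simp [PiLp.add_apply, PiLp.smul_apply]
  have hr1 : (t • p + s • q) 1 = t * p 1 + s * q 1 := by
    simp [PiLp.add_apply, PiLp.smul_apply]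
  have hIr := comb_I t s (p 0) (p 1) (q 0) (q 1) (a 0) (a 1) (b 0) (b 1) hts
  have hWr := comb_W t s (p 0) (p 1) (q 0) (q 1) (a 0) (a 1) (b 0) (b 1) hts
  rw [← hIp_def, ← hIq_def] at hIr
  rw [← hWp_def, ← hWq_def] at hWr
  have hts' : 0 < t * s := mul_pos ht' hs'
  -- helper: p = q leads to combination = p
  have hcomb_p : p = q → t • p + s • q = p := by
    intro h
    rw [← h, ← add_smul, hts, one_smul]
  -- r ≠ a
  have hra : t • p + s • q ≠ a := by
    intro hra
    have e0 : t * p 0 + s * q 0 = a 0 := by rw [← hra, hr0]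
    have e1 : t * p 1 + s * q 1 = a 1 := by rw [← hra, hr1]
    rw [e0, e1] at hIr
    have hzero : (a 0 - a 0) * (b 0 - a 0) + (a 1 - a 1) * (b 1 - a 1) = 0 := by ring
    rw [hzero] at hIr
    have hD : (p 0 - q 0)^2 + (p 1 - q 1)^2 ≤ 0 := by nlinarith [hIr, hIp0, hIq0, hts']
    have h00 : p 0 - q 0 = 0 := by
      have h := le_antisymm (by linarith [sq_nonneg (p 1 - q 1)] : (p 0 - q 0)^2 ≤ 0)
        (sq_nonneg (p 0 - q 0))
      exact pow_eq_zero_iff two_ne_zero |>.mp h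
    have h11 : p 1 - q 1 = 0 := by
      have h := le_antisymm (by linarith [sq_nonneg (p 0 - q 0)] : (p 1 - q 1)^2 ≤ 0)
        (sq_nonneg (p 1 - q 1))
      exact pow_eq_zero_iff two_ne_zero |>.mp h
    have hpq : p = q := by
      ext i
      fin_cases i
      · exact sub_eq_zero.mp h00
      · exact sub_eq_zero.mp h11
    exact hpa ((hcomb_p hpq).symm.trans hra)
  -- r ≠ b
  have hrb : t • p + s • q ≠ b := by
    intro hrb
    have e0 : t * p 0 + s * q 0 = b 0 := by rw [← hrb, hr0]
    have e1 : t * p 1 + s * q 1 = b 1 := by rw [← hrb, hr1]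
    rw [e0, e1] at hIr
    have hzero : (a 0 - b 0) * (b 0 - b 0) + (a 1 - b 1) * (b 1 - b 1) = 0 := by ring
    rw [hzero] at hIr
    have hD : (p 0 - q 0)^2 + (p 1 - q 1)^2 ≤ 0 := by nlinarith [hIr, hIp0, hIq0, hts']
    have h00 : p 0 - q 0 = 0 := by
      have h := le_antisymm (by linarith [sq_nonneg (p 1 - q 1)] : (p 0 - q 0)^2 ≤ 0)
        (sq_nonneg (p 0 - q 0))
      exact pow_eq_zero_iff two_ne_zero |>.mp h
    have h11 : p 1 - q 1 = 0 := by
      have h := le_antisymm (by linarith [sq_nonneg (p 0 - q 0)] : (p 1 - q 1)^2 ≤ 0)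
        (sq_nonneg (p 1 - q 1))
      exact pow_eq_zero_iff two_ne_zero |>.mp h
    have hpq : p = q := by
      ext i
      fin_cases i
      · exact sub_eq_zero.mp h00
      · exact sub_eq_zero.mp h11
    exact hpb ((hcomb_p hpq).symm.trans hrb)
  refine ⟨hra, hrb, ?_⟩
  rw [key_iff a b (t • p + s • q) θ hθ₁ hθ₂ hra hrb, hr0, hr1, hIr, hWr]
  have habs : |t * Wp + s * Wq| ≤ t * |Wp| + s * |Wq| := by
    calc |t * Wp + s * Wq| ≤ |t * Wp| + |s * Wq| := abs_add_le _ _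
    _ = t * |Wp| + s * |Wq| := by
        rw [abs_mul, abs_mul, abs_of_nonneg ht, abs_of_nonneg hs]
  have h1 : Real.sin θ * (t * Ip) - Real.cos θ * (t * |Wp|) ≤ 0 := by nlinarith [hkp, ht'.le]
  have h2 : Real.sin θ * (s * Iq) - Real.cos θ * (s * |Wq|) ≤ 0 := by nlinarith [hkq, hs'.le]
  have h3 : Real.cos θ * (t * |Wp| + s * |Wq|) ≤ Real.cos θ * |t * Wp + s * Wq| :=
    mul_le_mul_of_nonpos_left habs hcosθ
  have h4 : 0 ≤ Real.sin θ * (t * s * ((p 0 - q 0)^2 + (p 1 - q 1)^2)) := by positivity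
  linarith [h1, h2, h3, h4]
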